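/- Let F be a field, α ∈ F nonzero, and let a = α·x be the corresponding Laurent polynomial in F[x, x⁻¹]. Then for every β ∈ F and every integer m, the element a − 1 divides β·xᵐ − 1 in F[x, x⁻¹] if and only if β = αᵐ (integer power in the group of units of F). -/

import Mathlib

open LaurentPolynomial

theorem stmt_1 (F : Type*) [Field F] (α : F) (hα : α ≠ 0) :
    ∀ (β : F) (m : ℤ),
      ((C α * T 1 - 1 : LaurentPolynomial F) ∣ (C β * T m - 1)) ↔ β = α ^ m := by
  intro β m
  set u : Fˣ := Units.mk0 α hα with hu
  have hmul : (C α * T 1 : LaurentPolynomial F) * (C α⁻¹ * T (-1)) = 1 := by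
    rw [mul_mul_mul_comm, ← map_mul C, mul_inv_cancel₀ hα, ← T_add]
    simp
  have hmul' : (C α⁻¹ * T (-1) : LaurentPolynomial F) * (C α * T 1) = 1 := by
    rw [mul_comm]; exact hmul
  set U : (LaurentPolynomial F)ˣ := ⟨C α * T 1, C α⁻¹ * T (-1), hmul, hmul'⟩ with hU
  have hUinv : ((U⁻¹ : _ˣ) : LaurentPolynomial F) = C α⁻¹ * T (-1) := rfl
  have hUz : ∀ k : ℤ, ((U ^ k : _ˣ) : LaurentPolynomial F) = C ((u ^ k : Fˣ) : F) * T k := by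
    intro k
    induction k using Int.induction_on with
    | zero => simp
    | succ n ih =>
      rw [zpow_add_one, zpow_add_one, Units.val_mul, ih]
      show _ = C ((u ^ (n:ℤ) * u : Fˣ) : F) * T ((n:ℤ) + 1)
      rw [Units.val_mul, mul_mul_mul_comm, ← map_mul C, ← T_add]
      rfl
    | pred n ih =>
      rw [zpow_sub_one, zpow_sub_one, Units.val_mul, ih, hUinv]
      show _ = C ((u ^ (-(n:ℤ)) * u⁻¹ : Fˣ) : F) * T (-(n:ℤ) - 1)
      rw [Units.val_mul, mul_mul_mul_comm, ← map_mul C, ← T_add]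
      norm_num
      rfl
  have hdvd : ∀ k : ℤ, ((U : LaurentPolynomial F) - 1) ∣ ((U ^ k : _ˣ) : LaurentPolynomial F) - 1 := by
    intro k
    induction k using Int.induction_on with
    | zero => simp
    | succ n ih =>
      have : ((U ^ ((n:ℤ)+1) : _ˣ) : LaurentPolynomial F) - 1
          = ((U ^ (n:ℤ) : _ˣ) : LaurentPolynomial F) * ((U : LaurentPolynomial F) - 1)
            + (((U ^ (n:ℤ) : _ˣ) : LaurentPolynomial F) - 1) := by
        rw [zpow_add_one, Units.val_mul]; ring
      rw [this]
      exact dvd_add (Dvd.intro_left _ rfl) ih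
    | pred n ih =>
      have : ((U ^ (-(n:ℤ)-1) : _ˣ) : LaurentPolynomial F) - 1
          = ((U ^ (-(n:ℤ)-1) : _ˣ) : LaurentPolynomial F)
              * ((1 : LaurentPolynomial F) - (U : LaurentPolynomial F))
            + (((U ^ (-(n:ℤ)) : _ˣ) : LaurentPolynomial F) - 1) := by
        have h1 : ((U ^ (-(n:ℤ)-1) : _ˣ) : LaurentPolynomial F) * (U : LaurentPolynomial F)
            = ((U ^ (-(n:ℤ)) : _ˣ) : LaurentPolynomial F) := by
          rw [← Units.val_mul, ← zpow_add_one]; norm_num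
        linear_combination h1
      rw [this]
      exact dvd_add (Dvd.dvd.mul_left (dvd_sub_comm.mp dvd_rfl) _) ih
  constructor
  · rintro ⟨c, hc⟩
    -- evaluation hom sending T n to α^(-n)
    set φ : LaurentPolynomial F →ₐ[F] F :=
      (AddMonoidAlgebra.lift F F ℤ) ((Units.coeHom F).comp (zpowersHom Fˣ u⁻¹)) with hφ
    have hT : ∀ n : ℤ, φ (T n) = ((u ^ (-n) : Fˣ) : F) := by
      intro n
      show φ (AddMonoidAlgebra.single n 1) = _
      rw [hφ, AddMonoidAlgebra.lift_single]
      simp [zpow_neg]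
    have hC : ∀ a : F, φ (C a) = a := fun a => by
      show φ (AddMonoidAlgebra.single 0 a) = a
      rw [hφ, AddMonoidAlgebra.lift_single]
      simp
    have := congrArg φ hc
    simp only [map_sub, map_mul, map_one, hT, hC] at this
    have hα1 : (α : F) * ((u ^ (-(1:ℤ)) : Fˣ) : F) = 1 := by
      rw [Units.val_zpow_eq_zpow_val]
      simp [hu, zpow_neg, mul_inv_cancel₀ hα]
    rw [hα1, sub_self, zero_mul] at this
    have hβ : β * ((u ^ (-m) : Fˣ) : F) = 1 := sub_eq_zero.mp this
    have : β = ((u ^ m : Fˣ) : F) := by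
      have h2 : ((u ^ (-m) : Fˣ) : F) * ((u ^ m : Fˣ) : F) = 1 := by
        rw [← Units.val_mul, ← zpow_add]; simp
      calc β = β * (((u ^ (-m) : Fˣ) : F) * ((u ^ m : Fˣ) : F)) := by rw [h2, mul_one]
        _ = (β * ((u ^ (-m) : Fˣ) : F)) * ((u ^ m : Fˣ) : F) := by ring
        _ = ((u ^ m : Fˣ) : F) := by rw [hβ, one_mul]
    rw [this, Units.val_zpow_eq_zpow_val, hu, Units.val_mk0]
  · intro hβ
    have : (C β * T m : LaurentPolynomial F) = ((U ^ m : _ˣ) : LaurentPolynomial F) := by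
      rw [hUz m, hβ, Units.val_zpow_eq_zpow_val, hu, Units.val_mk0]
    rw [this]
    exact hdvd m
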